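/- Let G be a finite bipartite graph with left vertex set U of size m ≥ 1 and right vertex set V of size n ≥ 1, with no isolated vertices, and let k be an odd positive integer. Let P and Q be the probability mass functions on U and V given by P(u) = d(u)/|E(G)| and Q(v) = d(v)/|E(G)|. Then the number |𝒫_k| of walks of length k in G (where edges may be repeated) satisfies |𝒫_k| ≥ |E(G)|^k · exp( -((k-1)/2) · (H(P) + H(Q)) ), where the entropies are in nats. -/

import Mathlib

/-- The bipartite graph on `U ⊕ V` determined by the relation `R : U → V → Prop`:
a left vertex `u` is adjacent to a right vertex `v` iff `R u v`, and there are no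
edges within `U` or within `V`. -/
def bipGraph {U V : Type*} (R : U → V → Prop) : SimpleGraph (U ⊕ V) where
  Adj x y :=
    Sum.elim (fun u => Sum.elim (fun _ => False) (fun v => R u v))
      (fun v => Sum.elim (fun u => R u v) (fun _ => False)) x y
  symm := ⟨by rintro (u | v) (u' | v') h <;> simp_all⟩
  loopless := ⟨by rintro (u | v) h <;> exact h⟩

/-- The degree of the left vertex `u`. -/
def degL {U V : Type*} [Fintype V] (R : U → V → Prop) [∀ u v, Decidable (R u v)] (u : U) : ℕ :=
  (Finset.univ.filter fun v => R u v).card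

/-- The degree of the right vertex `v`. -/
def degR {U V : Type*} [Fintype U] (R : U → V → Prop) [∀ u v, Decidable (R u v)] (v : V) : ℕ :=
  (Finset.univ.filter fun u => R u v).card

/-- The number of edges of the bipartite graph. -/
def edgeCount {U V : Type*} [Fintype U] [Fintype V] (R : U → V → Prop)
    [∀ u v, Decidable (R u v)] : ℕ :=
  (Finset.univ.filter fun p : U × V => R p.1 p.2).card

/-- The number of walks of length `k` in the bipartite graph (sequences of `k + 1`
vertices, each adjacent to the next; vertices and edges may be repeated). -/
noncomputable def walkCount {U V : Type*} [Fintype U] [Fintype V]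
    (R : U → V → Prop) (k : ℕ) : ℕ :=
  ∑ x : U ⊕ V, ∑ y : U ⊕ V, Nat.card {w : (bipGraph R).Walk x y // w.length = k}

/-- The Shannon entropy (in nats) of a probability mass function `p` on a finite set,
with the convention `0 · log 0 = 0` (automatic in Lean since `Real.log 0 = 0`). -/
noncomputable def entPMF {α : Type*} [Fintype α] (p : α → ℝ) : ℝ :=
  -∑ a, p a * Real.log (p a)

instance bipDec {U V : Type*} (R : U → V → Prop) [∀ u v, Decidable (R u v)] :
    DecidableRel (bipGraph R).Adj
  | Sum.inl _, Sum.inl _ => instDecidableFalse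
  | Sum.inl u, Sum.inr v => ‹∀ u v, Decidable (R u v)› u v
  | Sum.inr v, Sum.inl u => ‹∀ u v, Decidable (R u v)› u v
  | Sum.inr _, Sum.inr _ => instDecidableFalse

/-- The number of walks of length `k` starting at a given vertex, defined recursively. -/
noncomputable def gfun {U V : Type*} [Fintype U] [Fintype V] (R : U → V → Prop)
    [∀ u v, Decidable (R u v)] : ℕ → (U ⊕ V) → ℕ
  | 0, _ => 1
  | k+1, x => ∑ z : U ⊕ V, if (bipGraph R).Adj x z then gfun R k z else 0

section Aux

variable {U V : Type*} [Fintype U] [Fintype V] (R : U → V → Prop) [∀ u v, Decidable (R u v)]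

lemma gfun_zero (x : U ⊕ V) : gfun R 0 x = 1 := rfl

lemma gfun_succ_inl (k : ℕ) (u : U) :
    gfun R (k+1) (Sum.inl u) =
      ∑ v ∈ Finset.univ.filter (fun v => R u v), gfun R k (Sum.inr v) := by
  show (∑ z : U ⊕ V, if (bipGraph R).Adj (Sum.inl u) z then gfun R k z else 0) = _
  rw [Fintype.sum_sum_type]
  simp [bipGraph, Finset.sum_filter]

lemma gfun_succ_inr (k : ℕ) (v : V) :
    gfun R (k+1) (Sum.inr v) =
      ∑ u ∈ Finset.univ.filter (fun u => R u v), gfun R k (Sum.inl u) := by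
  show (∑ z : U ⊕ V, if (bipGraph R).Adj (Sum.inr v) z then gfun R k z else 0) = _
  rw [Fintype.sum_sum_type]
  simp [bipGraph, Finset.sum_filter]

lemma walkCount_eq (k : ℕ) : walkCount R k = ∑ x : U ⊕ V, gfun R k x := by
  classical
  have gm : ∀ (k : ℕ) (x : U ⊕ V),
      gfun R k x = ∑ y : U ⊕ V, ((bipGraph R).adjMatrix ℕ ^ k) x y := by
    intro k
    induction k with
    | zero => intro x; simp [gfun_zero, Matrix.one_apply]
    | succ k ih =>
      intro x
      show (∑ z : U ⊕ V, if (bipGraph R).Adj x z then gfun R k z else 0) = _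
      have : ∀ y : U ⊕ V, ((bipGraph R).adjMatrix ℕ ^ (k+1)) x y
          = ∑ z : U ⊕ V, ((bipGraph R).adjMatrix ℕ) x z * ((bipGraph R).adjMatrix ℕ ^ k) z y := by
        intro y; rw [pow_succ', Matrix.mul_apply]
      simp only [this]
      rw [Finset.sum_comm]
      refine Finset.sum_congr rfl fun z _ => ?_
      rw [← Finset.mul_sum, ← ih z, SimpleGraph.adjMatrix_apply]
      by_cases h : (bipGraph R).Adj x z <;> simp [h]
  have h : ∀ x y : U ⊕ V, Nat.card {w : (bipGraph R).Walk x y // w.length = k}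
      = ((bipGraph R).adjMatrix ℕ ^ k) x y := by
    intro x y
    rw [SimpleGraph.adjMatrix_pow_apply_eq_card_walk, Nat.card_eq_fintype_card, Nat.cast_id]
    exact Fintype.card_congr' rfl
  unfold walkCount
  simp only [h]
  exact Finset.sum_congr rfl fun x _ => (gm k x).symm

lemma one_le_gfun (hisoL : ∀ u : U, ∃ v : V, R u v) (hisoR : ∀ v : V, ∃ u : U, R u v) :
    ∀ (k : ℕ) (x : U ⊕ V), 1 ≤ gfun R k x := by
  intro k
  induction k with
  | zero => intro x; simp [gfun_zero]
  | succ k ih =>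
    rintro (u | v)
    · obtain ⟨v, hv⟩ := hisoL u
      calc 1 ≤ gfun R k (Sum.inr v) := ih _
        _ ≤ ∑ v ∈ Finset.univ.filter (fun v => R u v), gfun R k (Sum.inr v) :=
            Finset.single_le_sum (f := fun v => gfun R k (Sum.inr v))
              (fun _ _ => Nat.zero_le _) (Finset.mem_filter.2 ⟨Finset.mem_univ _, hv⟩)
        _ = gfun R (k+1) (Sum.inl u) := (gfun_succ_inl R k u).symm
    · obtain ⟨u, hu⟩ := hisoR v
      calc 1 ≤ gfun R k (Sum.inl u) := ih _
        _ ≤ ∑ u ∈ Finset.univ.filter (fun u => R u v), gfun R k (Sum.inl u) :=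
            Finset.single_le_sum (f := fun u => gfun R k (Sum.inl u))
              (fun _ _ => Nat.zero_le _) (Finset.mem_filter.2 ⟨Finset.mem_univ _, hu⟩)
        _ = gfun R (k+1) (Sum.inr v) := (gfun_succ_inr R k v).symm

lemma swap_sum {M : Type*} [AddCommMonoid M] (F : U → V → M) :
    ∑ v, ∑ u ∈ Finset.univ.filter (fun u => R u v), F u v
      = ∑ u, ∑ v ∈ Finset.univ.filter (fun v => R u v), F u v := by
  calc ∑ v, ∑ u ∈ Finset.univ.filter (fun u => R u v), F u v
      = ∑ v : V, ∑ u : U, if R u v then F u v else 0 :=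
        Finset.sum_congr rfl fun v _ => Finset.sum_filter _ _
    _ = ∑ u : U, ∑ v : V, if R u v then F u v else 0 := Finset.sum_comm
    _ = ∑ u, ∑ v ∈ Finset.univ.filter (fun v => R u v), F u v :=
        Finset.sum_congr rfl fun u _ => (Finset.sum_filter _ _).symm

lemma sum_degL : ∑ u, degL R u = edgeCount R := by
  simp only [degL, edgeCount, Finset.card_filter]
  rw [Fintype.sum_prod_type]

lemma sum_degR : ∑ v, degR R v = edgeCount R := by
  simp only [degR, edgeCount, Finset.card_filter]
  rw [Fintype.sum_prod_type]
  exact Finset.sum_comm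

end Aux

lemma jensen_log {ι : Type*} (s : Finset ι) (w x : ι → ℝ)
    (hw : ∀ i ∈ s, 0 ≤ w i) (hw1 : ∑ i ∈ s, w i = 1)
    (hx : ∀ i ∈ s, 0 < x i) :
    ∑ i ∈ s, w i * Real.log (x i) ≤ Real.log (∑ i ∈ s, w i * x i) := by
  set S := ∑ i ∈ s, w i * x i with hS
  have hS0 : 0 < S := by
    have hex : ∃ i ∈ s, 0 < w i := by
      by_contra h
      push_neg at h
      have : ∑ i ∈ s, w i = 0 :=
        Finset.sum_eq_zero fun i hi => le_antisymm (h i hi) (hw i hi)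
      simp [this] at hw1
    obtain ⟨i, hi, hwi⟩ := hex
    exact Finset.sum_pos' (fun j hj => mul_nonneg (hw j hj) (hx j hj).le)
      ⟨i, hi, mul_pos hwi (hx i hi)⟩
  have key : ∀ i ∈ s, w i * Real.log (x i) - w i * Real.log S ≤ w i * (x i / S) - w i := by
    intro i hi
    have h1 : Real.log (x i / S) ≤ x i / S - 1 :=
      Real.log_le_sub_one_of_pos (div_pos (hx i hi) hS0)
    have h2 : Real.log (x i / S) = Real.log (x i) - Real.log S :=
      Real.log_div (hx i hi).ne' hS0.ne'
    have h3 : w i * (Real.log (x i) - Real.log S) ≤ w i * (x i / S - 1) := by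
      rw [← h2]; exact mul_le_mul_of_nonneg_left h1 (hw i hi)
    nlinarith [h3]
  have hsum := Finset.sum_le_sum key
  rw [Finset.sum_sub_distrib, Finset.sum_sub_distrib, ← Finset.sum_mul, hw1,
    one_mul] at hsum
  have : ∑ i ∈ s, w i * (x i / S) = 1 := by
    rw [show (fun i => w i * (x i / S)) = fun i => (w i * x i) / S from by
      funext i; ring]
    rw [← Finset.sum_div, ← hS, div_self hS0.ne']
  rw [this] at hsum
  linarith

lemma step_ineq {A B : Type*} [Fintype A] [Fintype B] (S : A → B → Prop)
    [∀ a b, Decidable (S a b)] {E : ℝ} (hE : 0 < E)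
    (hdeg : ∀ a : A, 0 < ((Finset.univ.filter fun b => S a b).card))
    (c : B → ℝ) (hc : ∀ b, 0 < c b) :
    ∑ a : A, (((Finset.univ.filter fun b => S a b).card : ℝ) / E *
          Real.log ((Finset.univ.filter fun b => S a b).card)
        + (1 / E) * ∑ b ∈ Finset.univ.filter fun b => S a b, Real.log (c b))
      ≤ ∑ a : A, ((Finset.univ.filter fun b => S a b).card : ℝ) / E *
          Real.log (∑ b ∈ Finset.univ.filter fun b => S a b, c b) := by
  refine Finset.sum_le_sum fun a _ => ?_
  set s := Finset.univ.filter fun b => S a b with hs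
  set d : ℝ := (s.card : ℝ) with hd
  have hd0 : (0:ℝ) < d := by rw [hd]; exact_mod_cast hdeg a
  have hj : ∑ b ∈ s, (1 / d) * Real.log (c b)
      ≤ Real.log (∑ b ∈ s, (1 / d) * c b) := by
    refine jensen_log s _ _ (fun b _ => by positivity) ?_ (fun b _ => hc b)
    rw [Finset.sum_const, nsmul_eq_mul, hd]
    field_simp
    rw [div_self]; exact_mod_cast (hdeg a).ne'
  rw [← Finset.mul_sum, ← Finset.mul_sum] at hj
  have hT0 : 0 < ∑ b ∈ s, c b := by
    refine Finset.sum_pos (fun b _ => hc b) ?_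
    rw [← Finset.card_pos]; exact hdeg a
  rw [show (1 / d) * ∑ b ∈ s, c b = (∑ b ∈ s, c b) / d from by ring,
    Real.log_div hT0.ne' hd0.ne'] at hj
  have hmul := mul_le_mul_of_nonneg_left hj (le_of_lt (div_pos hd0 hE))
  have hL : d / E * ((1 / d) * ∑ b ∈ s, Real.log (c b))
      = (1 / E) * ∑ b ∈ s, Real.log (c b) := by
    field_simp
  rw [hL, mul_sub] at hmul
  linarith


/-- Entropy-based lower bound on the number of walks of odd length `k` in a finite
bipartite graph with nonempty sides and no isolated vertices:
`|𝒫_k| ≥ |E(G)|^k · exp(-((k-1)/2) · (H(P) + H(Q)))`, where `P(u) = d(u)/|E(G)|` and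
`Q(v) = d(v)/|E(G)|`. -/
theorem walks_entropy_lower_bound_odd {U V : Type*} [Fintype U] [Fintype V]
    (R : U → V → Prop) [∀ u v, Decidable (R u v)]
    (hU : 0 < Fintype.card U) (hV : 0 < Fintype.card V)
    (hisoL : ∀ u : U, ∃ v : V, R u v) (hisoR : ∀ v : V, ∃ u : U, R u v)
    (k : ℕ) (hk0 : 0 < k) (hk : Odd k) :
    (edgeCount R : ℝ) ^ k *
        Real.exp (-(((k : ℝ) - 1) / 2) *
          (entPMF (fun u : U => (degL R u : ℝ) / (edgeCount R : ℝ)) +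
            entPMF (fun v : V => (degR R v : ℝ) / (edgeCount R : ℝ))))
      ≤ (walkCount R k : ℝ) := by
  obtain ⟨t, rfl⟩ := hk
  set E : ℝ := (edgeCount R : ℝ) with hEdef
  have hdL : ∀ u, 0 < degL R u := fun u => by
    rw [degL, Finset.card_pos]
    obtain ⟨v, hv⟩ := hisoL u
    exact ⟨v, Finset.mem_filter.2 ⟨Finset.mem_univ _, hv⟩⟩
  have hdR : ∀ v, 0 < degR R v := fun v => by
    rw [degR, Finset.card_pos]
    obtain ⟨u, hu⟩ := hisoR v
    exact ⟨u, Finset.mem_filter.2 ⟨Finset.mem_univ _, hu⟩⟩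
  have hEnat : 0 < edgeCount R := by
    rw [← sum_degL R]
    exact Finset.sum_pos (fun u _ => hdL u)
      (Finset.univ_nonempty_iff.2 (Fintype.card_pos_iff.1 hU))
  have hE : (0:ℝ) < E := by rw [hEdef]; exact_mod_cast hEnat
  have hg1 := one_le_gfun R hisoL hisoR
  have hgpos : ∀ (k : ℕ) (x : U ⊕ V), (0:ℝ) < (gfun R k x : ℝ) := fun k x => by
    exact_mod_cast Nat.lt_of_lt_of_le Nat.zero_lt_one (hg1 k x)
  set LP : ℝ := ∑ u, (degL R u : ℝ) / E * Real.log (degL R u) with hLP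
  set LQ : ℝ := ∑ v, (degR R v : ℝ) / E * Real.log (degR R v) with hLQ
  have hPsum : ∑ u, (degL R u : ℝ) / E = 1 := by
    rw [← Finset.sum_div]
    have h1 : ((∑ u, degL R u : ℕ) : ℝ) = E := by rw [sum_degL]
    rw [Nat.cast_sum] at h1
    rw [h1]
    exact div_self hE.ne'
  have hQsum : ∑ v, (degR R v : ℝ) / E = 1 := by
    rw [← Finset.sum_div]
    have h1 : ((∑ v, degR R v : ℕ) : ℝ) = E := by rw [sum_degR]
    rw [Nat.cast_sum] at h1
    rw [h1]
    exact div_self hE.ne'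
  -- cast lemmas for gfun recursions
  have hcastL : ∀ (k : ℕ) (u : U),
      (∑ v ∈ Finset.univ.filter (fun v => R u v), ((gfun R k (Sum.inr v) : ℕ) : ℝ))
        = ((gfun R (k+1) (Sum.inl u) : ℕ) : ℝ) := by
    intro k u; rw [gfun_succ_inl, Nat.cast_sum]
  have hcastR : ∀ (k : ℕ) (v : V),
      (∑ u ∈ Finset.univ.filter (fun u => R u v), ((gfun R k (Sum.inl u) : ℕ) : ℝ))
        = ((gfun R (k+1) (Sum.inr v) : ℕ) : ℝ) := by
    intro k v; rw [gfun_succ_inr, Nat.cast_sum]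
  -- the main entropy induction
  have main : ∀ t : ℕ, (t:ℝ) * (LP + LQ)
      ≤ ∑ v, (degR R v : ℝ) / E * Real.log (gfun R (2*t) (Sum.inr v)) := by
    intro t
    induction t with
    | zero => simp [gfun_zero]
    | succ t ih =>
      -- step 2 : from left vertices
      have h2 := step_ineq R hE (fun u => hdL u)
        (fun v => ((gfun R (2*t) (Sum.inr v) : ℕ) : ℝ)) (fun v => hgpos _ _)
      have h2' : LP + ∑ v, (degR R v : ℝ) / E * Real.log (gfun R (2*t) (Sum.inr v))
          ≤ ∑ u, (degL R u : ℝ) / E * Real.log (gfun R (2*t+1) (Sum.inl u)) := by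
        rw [Finset.sum_add_distrib] at h2
        have e1 : (∑ u, ((Finset.univ.filter fun v => R u v).card : ℝ) / E *
            Real.log ((Finset.univ.filter fun v => R u v).card)) = LP := rfl
        have e2 : (∑ u, (1 / E) * ∑ v ∈ Finset.univ.filter fun v => R u v,
              Real.log ((gfun R (2*t) (Sum.inr v) : ℕ) : ℝ))
            = ∑ v, (degR R v : ℝ) / E * Real.log (gfun R (2*t) (Sum.inr v)) := by
          rw [← Finset.mul_sum, ← swap_sum R (fun u v => Real.log ((gfun R (2*t) (Sum.inr v) : ℕ) : ℝ))]
          rw [Finset.mul_sum]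
          refine Finset.sum_congr rfl fun v _ => ?_
          rw [Finset.sum_const, nsmul_eq_mul]
          show (1 / E) * ((degR R v : ℝ) * _) = _
          ring
        rw [e1, e2] at h2
        refine le_trans h2 (le_of_eq (Finset.sum_congr rfl fun u _ => ?_))
        rw [hcastL (2*t) u]
        rfl
      -- step 1 : from right vertices
      have h1 := step_ineq (fun v u => R u v) hE (fun v => hdR v)
        (fun u => ((gfun R (2*t+1) (Sum.inl u) : ℕ) : ℝ)) (fun u => hgpos _ _)
      have h1' : LQ + ∑ u, (degL R u : ℝ) / E * Real.log (gfun R (2*t+1) (Sum.inl u))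
          ≤ ∑ v, (degR R v : ℝ) / E * Real.log (gfun R (2*t+1+1) (Sum.inr v)) := by
        rw [Finset.sum_add_distrib] at h1
        have e1 : (∑ v, ((Finset.univ.filter fun u => R u v).card : ℝ) / E *
            Real.log ((Finset.univ.filter fun u => R u v).card)) = LQ := rfl
        have e2 : (∑ v, (1 / E) * ∑ u ∈ Finset.univ.filter fun u => R u v,
              Real.log ((gfun R (2*t+1) (Sum.inl u) : ℕ) : ℝ))
            = ∑ u, (degL R u : ℝ) / E * Real.log (gfun R (2*t+1) (Sum.inl u)) := by
          rw [← Finset.mul_sum,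
            swap_sum R (fun u v => Real.log ((gfun R (2*t+1) (Sum.inl u) : ℕ) : ℝ))]
          rw [Finset.mul_sum]
          refine Finset.sum_congr rfl fun u _ => ?_
          rw [Finset.sum_const, nsmul_eq_mul]
          show (1 / E) * ((degL R u : ℝ) * _) = _
          ring
        rw [e1, e2] at h1
        refine le_trans h1 (le_of_eq (Finset.sum_congr rfl fun v _ => ?_))
        rw [hcastR (2*t+1) v]
        rfl
      have hgoal : 2*(t+1) = 2*t+1+1 := by ring
      rw [hgoal]
      push_cast
      linarith
  -- lower-bounding the walk count by walks starting on the left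
  have hlow : ∑ v, (degR R v : ℝ) * (gfun R (2*t) (Sum.inr v) : ℝ)
      ≤ (walkCount R (2*t+1) : ℝ) := by
    rw [walkCount_eq, Nat.cast_sum, Fintype.sum_sum_type]
    have e : ∑ v, (degR R v : ℝ) * (gfun R (2*t) (Sum.inr v) : ℝ)
        = ∑ u, ((gfun R (2*t+1) (Sum.inl u) : ℕ) : ℝ) := by
      calc ∑ v, (degR R v : ℝ) * (gfun R (2*t) (Sum.inr v) : ℝ)
          = ∑ v, ∑ u ∈ Finset.univ.filter (fun u => R u v),
              ((gfun R (2*t) (Sum.inr v) : ℕ) : ℝ) := by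
            refine Finset.sum_congr rfl fun v _ => ?_
            rw [Finset.sum_const, nsmul_eq_mul]
            rfl
        _ = ∑ u, ∑ v ∈ Finset.univ.filter (fun v => R u v),
              ((gfun R (2*t) (Sum.inr v) : ℕ) : ℝ) :=
            swap_sum R _
        _ = ∑ u, ((gfun R (2*t+1) (Sum.inl u) : ℕ) : ℝ) :=
            Finset.sum_congr rfl fun u _ => hcastL (2*t) u
    rw [e]
    have : (0:ℝ) ≤ ∑ v, ((gfun R (2*t+1) (Sum.inr v) : ℕ) : ℝ) :=
      Finset.sum_nonneg fun v _ => (hgpos _ _).le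
    linarith
  -- Jensen for the final step
  have hjen : E * Real.exp ((t:ℝ)*(LP+LQ))
      ≤ ∑ v, (degR R v : ℝ) * (gfun R (2*t) (Sum.inr v) : ℝ) := by
    have hj := jensen_log Finset.univ (fun v => (degR R v : ℝ)/E)
      (fun v => (gfun R (2*t) (Sum.inr v) : ℝ))
      (fun v _ => by positivity) hQsum (fun v _ => hgpos _ _)
    have hSpos : 0 < ∑ v, (degR R v : ℝ)/E * (gfun R (2*t) (Sum.inr v) : ℝ) := by
      refine Finset.sum_pos (fun v _ => mul_pos ?_ (hgpos _ _))
        (Finset.univ_nonempty_iff.2 (Fintype.card_pos_iff.1 hV))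
      exact div_pos (by exact_mod_cast hdR v) hE
    have hexp : Real.exp ((t:ℝ)*(LP+LQ))
        ≤ ∑ v, (degR R v : ℝ)/E * (gfun R (2*t) (Sum.inr v) : ℝ) := by
      calc Real.exp ((t:ℝ)*(LP+LQ))
          ≤ Real.exp (∑ v, (degR R v : ℝ)/E * Real.log (gfun R (2*t) (Sum.inr v))) :=
            Real.exp_le_exp.2 (main t)
        _ ≤ Real.exp (Real.log (∑ v, (degR R v : ℝ)/E * (gfun R (2*t) (Sum.inr v) : ℝ))) :=
            Real.exp_le_exp.2 hj
        _ = _ := Real.exp_log hSpos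
    calc E * Real.exp ((t:ℝ)*(LP+LQ))
        ≤ E * ∑ v, (degR R v : ℝ)/E * (gfun R (2*t) (Sum.inr v) : ℝ) :=
          mul_le_mul_of_nonneg_left hexp hE.le
      _ = ∑ v, (degR R v : ℝ) * (gfun R (2*t) (Sum.inr v) : ℝ) := by
          rw [Finset.mul_sum]
          refine Finset.sum_congr rfl fun v _ => ?_
          field_simp
  -- compute the entropies
  have hHP : entPMF (fun u : U => (degL R u : ℝ) / E) = Real.log E - LP := by
    rw [entPMF]
    have e : ∀ u : U, (degL R u : ℝ)/E * Real.log ((degL R u : ℝ)/E)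
        = (degL R u : ℝ)/E * Real.log (degL R u) - (degL R u : ℝ)/E * Real.log E := by
      intro u
      rw [Real.log_div (by exact_mod_cast (hdL u).ne') hE.ne']
      ring
    rw [Finset.sum_congr rfl (fun u _ => e u), Finset.sum_sub_distrib, ← Finset.sum_mul, hPsum]
    rw [← hLP]
    ring
  have hHQ : entPMF (fun v : V => (degR R v : ℝ) / E) = Real.log E - LQ := by
    rw [entPMF]
    have e : ∀ v : V, (degR R v : ℝ)/E * Real.log ((degR R v : ℝ)/E)
        = (degR R v : ℝ)/E * Real.log (degR R v) - (degR R v : ℝ)/E * Real.log E := by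
      intro v
      rw [Real.log_div (by exact_mod_cast (hdR v).ne') hE.ne']
      ring
    rw [Finset.sum_congr rfl (fun v _ => e v), Finset.sum_sub_distrib, ← Finset.sum_mul, hQsum]
    rw [← hLQ]
    ring
  rw [hHP, hHQ]
  have hkey : E ^ (2*t+1) * Real.exp (-((((2*t+1 : ℕ) : ℝ) - 1)/2) *
      ((Real.log E - LP) + (Real.log E - LQ))) = E * Real.exp ((t:ℝ)*(LP+LQ)) := by
    have harg : -((((2*t+1 : ℕ) : ℝ) - 1)/2) * ((Real.log E - LP) + (Real.log E - LQ))
        = (t:ℝ)*(LP+LQ) + (-(((2*t : ℕ) : ℝ) * Real.log E)) := by push_cast; ring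
    have h2' : Real.exp (((2*t : ℕ) : ℝ) * Real.log E) = E ^ (2*t) := by
      rw [Real.exp_nat_mul, Real.exp_log hE]
    rw [harg, Real.exp_add, Real.exp_neg, h2', pow_succ]
    field_simp
  rw [hkey]
  exact le_trans hjen hlow
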